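/- arXiv:1502.04604 — 2 statements merged into one kernel-verified Lean document; each statement's English description precedes it below -/
import Mathlib

section
/- Let n ≥ 1 and let k, k' ∈ P^{+}, i.e., k = (k_1,…,k_n) and k' = (k'_1,…,k'_n) are integer vectors with k_1 ≥ k_2 ≥ … ≥ k_n ≥ 0 and k'_1 ≥ k'_2 ≥ … ≥ k'_n ≥ 0. Then ∫_{F(S̃_n^aff)} cos⁺_{k+ρ}(x) cos⁺_{k'+ρ}(x) dx = 2^{−n} · H_k · δ_{k,k'}, where ρ = (1/2,…,1/2) and dx is n-dimensional Lebesgue measure. -/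
open Real Finset MeasureTheory

/-- The symmetric multivariate cosine function
`cos⁺_λ(x) = Σ_{σ ∈ S_n} ∏_{i=1}^n cos(π λ_{σ(i)} x_i)`. -/
noncomputable def cosPlus (n : ℕ) (lam x : Fin n → ℝ) : ℝ :=
  ∑ σ : Equiv.Perm (Fin n), ∏ i : Fin n, Real.cos (Real.pi * lam (σ i) * x i)

/-- The fundamental domain `F(S̃_n^aff) = {x ∈ ℝ^n : 1 ≥ x_1 ≥ x_2 ≥ … ≥ x_n ≥ 0}`. -/
def Fdom (n : ℕ) : Set (Fin n → ℝ) :=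
  {x | (∀ i j : Fin n, i ≤ j → x j ≤ x i) ∧ ∀ i : Fin n, 0 ≤ x i ∧ x i ≤ 1}

/-- `H_k`, the order of the stabilizer of `k` under the permutation action of `S_n`
(where `σ(k)_i = k_{σ(i)}`, i.e. `σ(k) = k ∘ σ`). -/
def Hstab {n : ℕ} {α : Type*} [DecidableEq α] (k : Fin n → α) : ℕ :=
  (Finset.univ.filter fun σ : Equiv.Perm (Fin n) => k ∘ σ = k).card

/-! ### Auxiliary lemmas -/

lemma intCos (m : ℤ) : ∫ x in (0:ℝ)..1, Real.cos (Real.pi * m * x)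
    = if m = 0 then 1 else 0 := by
  rcases eq_or_ne m 0 with h | h
  · simp [h]
  · have hm : (m : ℝ) ≠ 0 := Int.cast_ne_zero.mpr h
    have hc : (Real.pi * m) ≠ 0 := mul_ne_zero Real.pi_ne_zero hm
    have := intervalIntegral.integral_comp_mul_left (a := (0:ℝ)) (b := 1)
      (f := Real.cos) (c := Real.pi * m) hc
    simp only [mul_zero, mul_one] at this
    rw [this, integral_cos]
    simp [h, mul_comm Real.pi (m:ℝ), Real.sin_int_mul_pi]

lemma orth1 (a b : ℕ) :
    ∫ x in Set.Icc (0:ℝ) 1,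
        Real.cos (Real.pi * ((a:ℝ) + 1/2) * x) * Real.cos (Real.pi * ((b:ℝ) + 1/2) * x)
      = if a = b then (2:ℝ)⁻¹ else 0 := by
  have key : ∀ x : ℝ,
      Real.cos (Real.pi * ((a:ℝ) + 1/2) * x) * Real.cos (Real.pi * ((b:ℝ) + 1/2) * x)
        = (Real.cos (Real.pi * ((a - b : ℤ) : ℝ) * x)
            + Real.cos (Real.pi * ((a + b + 1 : ℤ) : ℝ) * x)) / 2 := by
    intro x
    have h1 : Real.pi * ((a - b : ℤ) : ℝ) * x
        = Real.pi * ((a:ℝ) + 1/2) * x - Real.pi * ((b:ℝ) + 1/2) * x := by push_cast; ring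
    have h2 : Real.pi * ((a + b + 1 : ℤ) : ℝ) * x
        = Real.pi * ((a:ℝ) + 1/2) * x + Real.pi * ((b:ℝ) + 1/2) * x := by push_cast; ring
    rw [h1, h2, Real.cos_sub, Real.cos_add]
    ring
  rw [MeasureTheory.integral_Icc_eq_integral_Ioc,
    ← intervalIntegral.integral_of_le (by norm_num : (0:ℝ) ≤ 1)]
  simp only [key]
  have i1 : IntervalIntegrable (fun x => Real.cos (Real.pi * ((a - b : ℤ) : ℝ) * x))
      MeasureTheory.volume 0 1 := (Real.continuous_cos.comp (by continuity)).intervalIntegrable 0 1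
  have i2 : IntervalIntegrable (fun x => Real.cos (Real.pi * ((a + b + 1 : ℤ) : ℝ) * x))
      MeasureTheory.volume 0 1 := (Real.continuous_cos.comp (by continuity)).intervalIntegrable 0 1
  rw [intervalIntegral.integral_div, intervalIntegral.integral_add i1 i2, intCos, intCos]
  have hne : (a + b + 1 : ℤ) ≠ 0 := by omega
  have : ((a:ℤ) - b = 0) ↔ (a = b) := by omega
  simp [hne, this]
  rcases eq_or_ne a b with h | h <;> simp [h]

noncomputable def cube (n : ℕ) : Set (Fin n → ℝ) := Set.pi Set.univ (fun _ => Set.Icc 0 1)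

lemma cube_measurable (n : ℕ) : MeasurableSet (cube n) :=
  MeasurableSet.univ_pi fun _ => measurableSet_Icc

lemma cube_compact (n : ℕ) : IsCompact (cube n) :=
  isCompact_univ_pi fun _ => isCompact_Icc

lemma cube_prod_integral {n : ℕ} (f : Fin n → ℝ → ℝ) :
    ∫ x in cube n, ∏ i, f i (x i) = ∏ i, ∫ t in Set.Icc (0:ℝ) 1, f i t := by
  rw [← MeasureTheory.integral_indicator (cube_measurable n)]
  have h : (cube n).indicator (fun x => ∏ i, f i (x i))
      = fun x => ∏ i, (Set.Icc (0:ℝ) 1).indicator (f i) (x i) := by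
    funext x
    by_cases h : x ∈ cube n
    · rw [Set.indicator_of_mem h]
      exact Finset.prod_congr rfl fun i _ =>
        (Set.indicator_of_mem (h i (Set.mem_univ i)) _).symm
    · rw [Set.indicator_of_notMem h]
      have : ∃ i, x i ∉ Set.Icc (0:ℝ) 1 := by
        by_contra hc
        push_neg at hc
        exact h fun i _ => hc i
      obtain ⟨i, hi⟩ := this
      exact (Finset.prod_eq_zero (Finset.mem_univ i)
        (by simp [Set.indicator_of_notMem hi])).symm
  rw [h, MeasureTheory.integral_fintype_prod_volume_eq_prod
    (f := fun i => (Set.Icc (0:ℝ) 1).indicator (f i))]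
  exact Finset.prod_congr rfl fun i _ =>
    (MeasureTheory.integral_indicator measurableSet_Icc)

lemma coe_permEquiv {n : ℕ} (σ : Equiv.Perm (Fin n)) :
    ⇑(MeasurableEquiv.piCongrLeft (fun _ : Fin n => ℝ) σ.symm) = fun x => x ∘ σ := by
  funext x j
  rw [MeasurableEquiv.coe_piCongrLeft]
  have h := Equiv.piCongrLeft_apply_apply (fun _ : Fin n => ℝ) (σ.symm) x (σ j)
  rw [Equiv.symm_apply_apply] at h
  exact h

lemma comp_perm_measurePreserving {n : ℕ} (σ : Equiv.Perm (Fin n)) :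
    MeasurePreserving (fun x : Fin n → ℝ => x ∘ σ) volume volume := by
  rw [← coe_permEquiv σ]
  exact volume_measurePreserving_piCongrLeft (fun _ => ℝ) σ.symm

lemma comp_perm_embedding {n : ℕ} (σ : Equiv.Perm (Fin n)) :
    MeasurableEmbedding (fun x : Fin n → ℝ => x ∘ σ) := by
  rw [← coe_permEquiv σ]
  exact (MeasurableEquiv.piCongrLeft (fun _ : Fin n => ℝ) σ.symm).measurableEmbedding

lemma pair_null {n : ℕ} (i j : Fin n) (h : i ≠ j) :
    volume {x : Fin n → ℝ | x i = x j} = 0 := by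
  have heq : {x : Fin n → ℝ | x i = x j}
      = (LinearMap.ker ((LinearMap.proj i : (Fin n → ℝ) →ₗ[ℝ] ℝ) - LinearMap.proj j) : Set _) := by
    ext x
    simp [LinearMap.mem_ker, sub_eq_zero]
  rw [heq]
  refine Measure.addHaar_submodule _ _ ?_
  rw [Ne, Submodule.eq_top_iff']
  push_neg
  refine ⟨Pi.single i 1, ?_⟩
  simp [LinearMap.mem_ker, Pi.single_apply, h, h.symm]

lemma diag_null (n : ℕ) : volume {x : Fin n → ℝ | ¬ Function.Injective x} = 0 := by
  have hsub : {x : Fin n → ℝ | ¬ Function.Injective x}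
      ⊆ ⋃ (i : Fin n), ⋃ (j : Fin n), ⋃ (_ : i ≠ j), {x : Fin n → ℝ | x i = x j} := by
    intro x hx
    simp only [Set.mem_setOf_eq, Function.Injective] at hx
    push_neg at hx
    obtain ⟨i, j, hij, hne⟩ := hx
    exact Set.mem_iUnion.mpr ⟨i, Set.mem_iUnion.mpr ⟨j, Set.mem_iUnion.mpr ⟨hne, hij⟩⟩⟩
  refine measure_mono_null hsub ?_
  refine measure_iUnion_null fun i => measure_iUnion_null fun j => measure_iUnion_null fun h => ?_
  exact pair_null i j h

lemma diag_measurable (n : ℕ) : MeasurableSet {x : Fin n → ℝ | Function.Injective x} := by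
  have : {x : Fin n → ℝ | Function.Injective x}
      = ⋂ (i : Fin n), ⋂ (j : Fin n), ⋂ (_ : i ≠ j), {x : Fin n → ℝ | x i ≠ x j} := by
    ext x
    simp only [Set.mem_setOf_eq, Set.mem_iInter, Function.Injective]
    constructor
    · intro hx i j hij hc
      exact hij (hx hc)
    · intro hx a b hab
      by_contra hne
      exact hx a b hne hab
  rw [this]
  refine MeasurableSet.iInter fun i => MeasurableSet.iInter fun j => MeasurableSet.iInter fun _ => ?_
  exact (measurableSet_eq_fun (measurable_pi_apply i) (measurable_pi_apply j)).compl

lemma Fdom_measurable (n : ℕ) : MeasurableSet (Fdom n) := by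
  have : Fdom n = (⋂ (i : Fin n), ⋂ (j : Fin n), ⋂ (_ : i ≤ j), {x : Fin n → ℝ | x j ≤ x i})
      ∩ ⋂ (i : Fin n), ({x : Fin n → ℝ | 0 ≤ x i} ∩ {x | x i ≤ 1}) := by
    ext x
    simp only [Fdom, Set.mem_setOf_eq, Set.mem_inter_iff, Set.mem_iInter]
  rw [this]
  refine MeasurableSet.inter ?_ ?_
  · exact MeasurableSet.iInter fun i => MeasurableSet.iInter fun j => MeasurableSet.iInter fun _ =>
      measurableSet_le (measurable_pi_apply j) (measurable_pi_apply i)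
  · exact MeasurableSet.iInter fun i => MeasurableSet.inter
      (measurableSet_le measurable_const (measurable_pi_apply i))
      (measurableSet_le (measurable_pi_apply i) measurable_const)

lemma exists_sort_perm {n : ℕ} (x : Fin n → ℝ) :
    ∃ σ : Equiv.Perm (Fin n), ∀ i j : Fin n, i ≤ j → (x ∘ σ) j ≤ (x ∘ σ) i := by
  refine ⟨Fin.revPerm.trans (Tuple.sort x), fun i j hij => ?_⟩
  have h := Tuple.monotone_sort x (Fin.rev_le_rev.mpr hij)
  simpa using h

lemma perm_strictMono_eq_one {n : ℕ} (p : Equiv.Perm (Fin n)) (h : StrictMono ⇑p) : p = 1 := by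
  haveI hwf : WellFoundedLT (Fin n) := inferInstance
  have hsymm : StrictMono ⇑p.symm := by
    intro i j hij
    rcases lt_trichotomy (p.symm i) (p.symm j) with hc | hc | hc
    · exact hc
    · exact absurd (congrArg p hc) (by simp [hij.ne])
    · have := h hc
      simp only [Equiv.apply_symm_apply] at this
      exact absurd this (not_lt.mpr hij.le)
  refine Equiv.ext fun i => ?_
  have h1 : i ≤ p i := StrictMono.le_apply (f := ⇑p) h (x := i)
  have h2 : p i ≤ i := by
    have := StrictMono.le_apply (f := ⇑p.symm) hsymm (x := p i)
    simpa using this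
  exact le_antisymm h2 h1

lemma sort_unique {n : ℕ} (σ τ : Equiv.Perm (Fin n)) (x : Fin n → ℝ)
    (hinj : Function.Injective x)
    (hσ : ∀ i j : Fin n, i ≤ j → x (σ j) ≤ x (σ i))
    (hτ : ∀ i j : Fin n, i ≤ j → x (τ j) ≤ x (τ i)) : σ = τ := by
  set p : Equiv.Perm (Fin n) := τ.trans σ.symm with hp
  have hcomp : ∀ i, σ (p i) = τ i := fun i => by simp [hp]
  have hmono : StrictMono ⇑p := by
    intro i j hij
    have h1 : x (τ j) ≤ x (τ i) := hτ i j hij.le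
    have hne : x (τ j) ≠ x (τ i) := fun hc => (hij.ne (τ.injective (hinj hc)).symm).elim
    have hlt : x (τ j) < x (τ i) := lt_of_le_of_ne h1 hne
    by_contra hle
    push_neg at hle
    have := hσ (p j) (p i) hle
    rw [hcomp, hcomp] at this
    exact absurd this (not_le.mpr hlt)
  have hone : p = 1 := perm_strictMono_eq_one p hmono
  have h2 : τ.trans σ.symm = 1 := hone
  refine Equiv.ext fun i => ?_
  have := congrArg (fun e : Equiv.Perm (Fin n) => σ (e i)) h2
  simpa using this.symm

lemma cosPlus_comp {n : ℕ} (lam x : Fin n → ℝ) (σ : Equiv.Perm (Fin n)) :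
    cosPlus n lam (x ∘ σ) = cosPlus n lam x := by
  unfold cosPlus
  have step1 : ∀ τ : Equiv.Perm (Fin n),
      ∏ i, Real.cos (Real.pi * lam (τ i) * (x ∘ σ) i)
        = ∏ j, Real.cos (Real.pi * lam ((τ * σ.symm) j) * x j) := by
    intro τ
    rw [← Equiv.prod_comp σ (fun j => Real.cos (Real.pi * lam ((τ * σ.symm) j) * x j))]
    refine Finset.prod_congr rfl fun i _ => ?_
    simp [Equiv.Perm.mul_apply]
  calc ∑ τ : Equiv.Perm (Fin n), ∏ i, Real.cos (Real.pi * lam (τ i) * (x ∘ σ) i)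
      = ∑ τ : Equiv.Perm (Fin n), ∏ j, Real.cos (Real.pi * lam ((τ * σ.symm) j) * x j) :=
        Finset.sum_congr rfl fun τ _ => step1 τ
    _ = ∑ τ : Equiv.Perm (Fin n), ∏ j, Real.cos (Real.pi * lam (τ j) * x j) :=
        Fintype.sum_equiv (Equiv.mulRight σ.symm) _ _ (fun τ => rfl)

lemma cosPlus_continuous {n : ℕ} (lam : Fin n → ℝ) : Continuous (cosPlus n lam) := by
  unfold cosPlus
  refine continuous_finset_sum _ fun τ _ => continuous_finset_prod _ fun i _ => ?_
  exact Real.continuous_cos.comp ((continuous_const).mul (continuous_apply i))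

/-- Symmetrization: the integral over the cube of a symmetric function is `n!` times its
integral over the fundamental domain. -/
lemma integral_cube_eq_factorial {n : ℕ} (g : (Fin n → ℝ) → ℝ) (hg : Continuous g)
    (hsym : ∀ (σ : Equiv.Perm (Fin n)) (x : Fin n → ℝ), g (x ∘ σ) = g x) :
    ∫ x in cube n, g x = (Nat.factorial n : ℝ) * ∫ x in Fdom n, g x := by
  classical
  set Inj := {x : Fin n → ℝ | Function.Injective x} with hInj
  set C : Equiv.Perm (Fin n) → Set (Fin n → ℝ) := fun σ => (fun x => x ∘ σ) ⁻¹' Fdom n with hC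
  set C' : Equiv.Perm (Fin n) → Set (Fin n → ℝ) := fun σ => C σ ∩ Inj with hC'
  have hmeasC : ∀ σ, MeasurableSet (C σ) := fun σ =>
    (comp_perm_measurePreserving σ).measurable (Fdom_measurable n)
  have hmeasC' : ∀ σ, MeasurableSet (C' σ) := fun σ =>
    (hmeasC σ).inter (diag_measurable n)
  have hCsub : ∀ σ, C σ ⊆ cube n := by
    intro σ x hx i _
    have h2 := hx.2 (σ.symm i)
    simpa using h2
  have hunion : (⋃ σ : Equiv.Perm (Fin n), C' σ) = cube n ∩ Inj := by
    ext x
    constructor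
    · rintro hx
      obtain ⟨σ, hσ⟩ := Set.mem_iUnion.mp hx
      exact ⟨hCsub σ hσ.1, hσ.2⟩
    · rintro ⟨hx1, hx2⟩
      obtain ⟨σ, hσ⟩ := exists_sort_perm x
      refine Set.mem_iUnion.mpr ⟨σ, ⟨?_, hx2⟩⟩
      refine ⟨hσ, fun i => ?_⟩
      have := hx1 (σ i) (Set.mem_univ _)
      simpa using this
  have hdisj : Pairwise (Function.onFun Disjoint C') := by
    intro σ τ hne
    rw [Function.onFun, Set.disjoint_left]
    rintro x ⟨hx1, hx2⟩ ⟨hy1, _⟩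
    exact hne (sort_unique σ τ x hx2
      (fun i j hij => hx1.1 i j hij) (fun i j hij => hy1.1 i j hij))
  have hint : IntegrableOn g (cube n) :=
    hg.continuousOn.integrableOn_compact (cube_compact n)
  have haeInj : (cube n ∩ Inj : Set (Fin n → ℝ)) =ᵐ[volume] cube n := by
    rw [MeasureTheory.ae_eq_set]
    constructor
    · rw [Set.diff_eq_empty.mpr Set.inter_subset_left]
      exact measure_empty
    · refine measure_mono_null ?_ (diag_null n)
      intro x hx
      exact fun hinj => hx.2 ⟨hx.1, hinj⟩
  have step1 : ∫ x in cube n, g x = ∫ x in cube n ∩ Inj, g x :=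
    (MeasureTheory.setIntegral_congr_set haeInj).symm
  have step2 : ∫ x in cube n ∩ Inj, g x = ∑ σ : Equiv.Perm (Fin n), ∫ x in C' σ, g x := by
    rw [← hunion]
    exact MeasureTheory.integral_iUnion_fintype hmeasC' hdisj
      (fun σ => hint.mono_set (fun x hx => hCsub σ hx.1))
  have step3 : ∀ σ : Equiv.Perm (Fin n), ∫ x in C' σ, g x = ∫ x in Fdom n, g x := by
    intro σ
    have hae : (C' σ : Set (Fin n → ℝ)) =ᵐ[volume] C σ := by
      rw [MeasureTheory.ae_eq_set]
      constructor
      · rw [Set.diff_eq_empty.mpr Set.inter_subset_left]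
        exact measure_empty
      · refine measure_mono_null ?_ (diag_null n)
        intro x hx
        exact fun hinj => hx.2 ⟨hx.1, hinj⟩
    rw [MeasureTheory.setIntegral_congr_set hae]
    have := (comp_perm_measurePreserving σ).setIntegral_preimage_emb
      (comp_perm_embedding σ) g (Fdom n)
    rw [← this]
    exact MeasureTheory.setIntegral_congr_fun (hmeasC σ) (fun x _ => (hsym σ x).symm)
  calc ∫ x in cube n, g x = ∑ σ : Equiv.Perm (Fin n), ∫ x in C' σ, g x := step1.trans step2
    _ = ∑ _σ : Equiv.Perm (Fin n), ∫ x in Fdom n, g x := Finset.sum_congr rfl fun σ _ => step3 σ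
    _ = (Nat.factorial n : ℝ) * ∫ x in Fdom n, g x := by
        rw [Finset.sum_const, Finset.card_univ, Fintype.card_perm, Fintype.card_fin,
          nsmul_eq_mul]

lemma myAntitone_le {n : ℕ} (k k' : Fin n → ℕ) (hk : ∀ i j : Fin n, i ≤ j → k j ≤ k i)
    (hk' : ∀ i j : Fin n, i ≤ j → k' j ≤ k' i) (ρ : Equiv.Perm (Fin n))
    (h : ∀ i, k (ρ i) = k' i) : ∀ i, k' i ≤ k i := by
  intro i
  have hpig : ∃ j, j ≤ i ∧ i ≤ ρ j := by
    by_contra hc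
    push_neg at hc
    have himg : (Finset.Iic i).image ⇑ρ ⊆ Finset.Iio i := by
      intro a ha
      obtain ⟨j, hj, rfl⟩ := Finset.mem_image.mp ha
      exact Finset.mem_Iio.mpr (hc j (Finset.mem_Iic.mp hj))
    have hcard := Finset.card_le_card himg
    rw [Finset.card_image_of_injective _ ρ.injective, Fin.card_Iic, Fin.card_Iio] at hcard
    omega
  obtain ⟨j, hj1, hj2⟩ := hpig
  calc k' i ≤ k' j := hk' j i hj1
    _ = k (ρ j) := (h j).symm
    _ ≤ k i := hk i (ρ j) hj2

lemma myAntitone_eq {n : ℕ} (k k' : Fin n → ℕ) (hk : ∀ i j : Fin n, i ≤ j → k j ≤ k i)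
    (hk' : ∀ i j : Fin n, i ≤ j → k' j ≤ k' i) (ρ : Equiv.Perm (Fin n))
    (h : ∀ i, k (ρ i) = k' i) : k = k' := by
  have h2 : ∀ i, k' (ρ.symm i) = k i := by
    intro i
    have := h (ρ.symm i)
    rw [Equiv.apply_symm_apply] at this
    exact this.symm
  funext i
  exact le_antisymm (myAntitone_le k' k hk' hk ρ.symm h2 i) (myAntitone_le k k' hk hk' ρ h i)

lemma count_sum {n : ℕ} (k : Fin n → ℕ) (c : ℝ) :
    ∑ σ : Equiv.Perm (Fin n), ∑ τ : Equiv.Perm (Fin n),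
        (if k ∘ σ = k ∘ τ then c else 0)
      = (Nat.factorial n : ℝ) * (Hstab k : ℝ) * c := by
  classical
  have inner : ∀ σ : Equiv.Perm (Fin n),
      ∑ τ : Equiv.Perm (Fin n), (if k ∘ σ = k ∘ τ then c else 0)
        = (Hstab k : ℝ) * c := by
    intro σ
    have hre : ∑ τ : Equiv.Perm (Fin n), (if k ∘ σ = k ∘ τ then c else 0)
        = ∑ ρ : Equiv.Perm (Fin n), (if k ∘ ρ = k then c else 0) := by
      refine (Fintype.sum_equiv (Equiv.mulRight σ) _ _ fun ρ => ?_).symm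
      have hiff : (k ∘ σ = k ∘ (ρ * σ)) ↔ (k ∘ ρ = k) := by
        constructor
        · intro hh
          funext i
          have := congrFun hh (σ.symm i)
          simpa [Equiv.Perm.mul_apply] using this.symm
        · intro hh
          funext i
          have := congrFun hh (σ i)
          simpa [Equiv.Perm.mul_apply] using this.symm
      simp only [Equiv.coe_mulRight]
      exact (if_congr hiff rfl rfl).symm
    rw [hre, Finset.sum_ite, Finset.sum_const, Finset.sum_const_zero, add_zero, nsmul_eq_mul]
    rfl
  calc ∑ σ : Equiv.Perm (Fin n), ∑ τ : Equiv.Perm (Fin n), (if k ∘ σ = k ∘ τ then c else 0)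
      = ∑ _σ : Equiv.Perm (Fin n), (Hstab k : ℝ) * c :=
        Finset.sum_congr rfl fun σ _ => inner σ
    _ = (Nat.factorial n : ℝ) * (Hstab k : ℝ) * c := by
        rw [Finset.sum_const, Finset.card_univ, Fintype.card_perm, Fintype.card_fin,
          nsmul_eq_mul, mul_assoc]

theorem continuous_orthogonality_sym_halfinteger (n : ℕ) (hn : 1 ≤ n)
    (k k' : Fin n → ℕ)
    (hk : ∀ i j : Fin n, i ≤ j → k j ≤ k i)
    (hk' : ∀ i j : Fin n, i ≤ j → k' j ≤ k' i) :
    ∫ x in Fdom n,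
        cosPlus n (fun i => (k i : ℝ) + 1 / 2) x *
          cosPlus n (fun i => (k' i : ℝ) + 1 / 2) x
      = ((2 : ℝ) ^ n)⁻¹ * (Hstab k : ℝ) * (if k = k' then (1 : ℝ) else 0) := by
  classical
  set lam : Fin n → ℝ := fun i => (k i : ℝ) + 1 / 2 with hlam
  set mu : Fin n → ℝ := fun i => (k' i : ℝ) + 1 / 2 with hmu
  set g : (Fin n → ℝ) → ℝ := fun x => cosPlus n lam x * cosPlus n mu x with hgdef
  have hg : Continuous g := (cosPlus_continuous lam).mul (cosPlus_continuous mu)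
  have hsym : ∀ (σ : Equiv.Perm (Fin n)) (x : Fin n → ℝ), g (x ∘ σ) = g x := by
    intro σ x
    simp only [hgdef, cosPlus_comp]
  have hcube := integral_cube_eq_factorial g hg hsym
  -- expand g as a double sum of products
  have hexpand : ∀ x : Fin n → ℝ, g x
      = ∑ σ : Equiv.Perm (Fin n), ∑ τ : Equiv.Perm (Fin n),
          ∏ i, (Real.cos (Real.pi * lam (σ i) * x i) * Real.cos (Real.pi * mu (τ i) * x i)) := by
    intro x
    rw [hgdef]
    simp only [cosPlus]
    rw [Finset.sum_mul_sum]
    refine Finset.sum_congr rfl fun σ _ => Finset.sum_congr rfl fun τ _ => ?_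
    rw [← Finset.prod_mul_distrib]
  -- integrate term by term over the cube
  have hterm : ∀ σ τ : Equiv.Perm (Fin n),
      ∫ x in cube n,
          ∏ i, (Real.cos (Real.pi * lam (σ i) * x i) * Real.cos (Real.pi * mu (τ i) * x i))
        = (if k ∘ σ = k' ∘ τ then ((2:ℝ)⁻¹) ^ n else 0) := by
    intro σ τ
    rw [cube_prod_integral (fun i t =>
      Real.cos (Real.pi * lam (σ i) * t) * Real.cos (Real.pi * mu (τ i) * t))]
    have horth : ∀ i : Fin n,
        ∫ t in Set.Icc (0:ℝ) 1,
            Real.cos (Real.pi * lam (σ i) * t) * Real.cos (Real.pi * mu (τ i) * t)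
          = (if k (σ i) = k' (τ i) then (2:ℝ)⁻¹ else 0) := by
      intro i
      exact orth1 (k (σ i)) (k' (τ i))
    rw [Finset.prod_congr rfl fun i _ => horth i]
    by_cases h : k ∘ σ = k' ∘ τ
    · rw [if_pos h]
      have hall : ∀ i ∈ Finset.univ,
          (if k (σ i) = k' (τ i) then (2:ℝ)⁻¹ else 0) = (2:ℝ)⁻¹ :=
        fun i _ => if_pos (congrFun h i)
      rw [Finset.prod_congr rfl hall, Finset.prod_const, Finset.card_univ, Fintype.card_fin]
    · rw [if_neg h]
      have : ∃ i, k (σ i) ≠ k' (τ i) := by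
        by_contra hc
        push_neg at hc
        exact h (funext hc)
      obtain ⟨i, hi⟩ := this
      exact Finset.prod_eq_zero (Finset.mem_univ i) (if_neg hi)
  -- integrability of each term
  have hintterm : ∀ p : Equiv.Perm (Fin n) × Equiv.Perm (Fin n),
      IntegrableOn (fun x : Fin n → ℝ =>
        ∏ i, (Real.cos (Real.pi * lam (p.1 i) * x i) * Real.cos (Real.pi * mu (p.2 i) * x i)))
        (cube n) := by
    intro p
    refine ContinuousOn.integrableOn_compact (cube_compact n) (Continuous.continuousOn ?_)
    refine continuous_finset_prod _ fun i _ => Continuous.mul ?_ ?_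
    · exact Real.continuous_cos.comp ((continuous_const).mul (continuous_apply i))
    · exact Real.continuous_cos.comp ((continuous_const).mul (continuous_apply i))
  -- compute the cube integral
  have hcubeval : ∫ x in cube n, g x
      = ∑ σ : Equiv.Perm (Fin n), ∑ τ : Equiv.Perm (Fin n),
          (if k ∘ σ = k' ∘ τ then ((2:ℝ)⁻¹) ^ n else 0) := by
    have : ∫ x in cube n, g x
        = ∫ x in cube n, ∑ p : Equiv.Perm (Fin n) × Equiv.Perm (Fin n),
            ∏ i, (Real.cos (Real.pi * lam (p.1 i) * x i)
              * Real.cos (Real.pi * mu (p.2 i) * x i)) := by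
      refine MeasureTheory.setIntegral_congr_fun (cube_measurable n) (fun x _ => ?_)
      rw [hexpand x]
      exact (Fintype.sum_prod_type (f := fun p : Equiv.Perm (Fin n) × Equiv.Perm (Fin n) =>
        ∏ i, (Real.cos (Real.pi * lam (p.1 i) * x i)
          * Real.cos (Real.pi * mu (p.2 i) * x i)))).symm
    rw [this, MeasureTheory.integral_finset_sum _ (fun p _ => hintterm p)]
    rw [Fintype.sum_prod_type]
    exact Finset.sum_congr rfl fun σ _ => Finset.sum_congr rfl fun τ _ => hterm σ τ
  -- evaluate the double sum
  have hsumval : ∑ σ : Equiv.Perm (Fin n), ∑ τ : Equiv.Perm (Fin n),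
      (if k ∘ σ = k' ∘ τ then ((2:ℝ)⁻¹) ^ n else 0)
      = (Nat.factorial n : ℝ) * (Hstab k : ℝ) * (if k = k' then ((2:ℝ)⁻¹) ^ n else 0) := by
    by_cases hkk : k = k'
    · subst hkk
      rw [if_pos rfl]
      exact count_sum k (((2:ℝ)⁻¹) ^ n)
    · rw [if_neg hkk, mul_zero]
      refine Finset.sum_eq_zero fun σ _ => Finset.sum_eq_zero fun τ _ => ?_
      rw [if_neg]
      intro hco
      refine hkk (myAntitone_eq k k' hk hk' (τ.symm.trans σ) fun i => ?_)
      have := congrFun hco (τ.symm i)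
      simpa using this
  have hfac : (Nat.factorial n : ℝ) ≠ 0 := Nat.cast_ne_zero.mpr (Nat.factorial_ne_zero n)
  have hmain : (Nat.factorial n : ℝ) * ∫ x in Fdom n, g x
      = (Nat.factorial n : ℝ) * (Hstab k : ℝ) * (if k = k' then ((2:ℝ)⁻¹) ^ n else 0) := by
    rw [← hcube, hcubeval, hsumval]
  have hfinal : ∫ x in Fdom n, g x
      = (Hstab k : ℝ) * (if k = k' then ((2:ℝ)⁻¹) ^ n else 0) := by
    have h3 : (Nat.factorial n : ℝ) * ∫ x in Fdom n, g x
        = (Nat.factorial n : ℝ)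
          * ((Hstab k : ℝ) * (if k = k' then ((2:ℝ)⁻¹) ^ n else 0)) := by
      rw [hmain, mul_assoc]
    exact mul_left_cancel₀ hfac h3
  rw [show (∫ x in Fdom n,
        cosPlus n (fun i => (k i : ℝ) + 1 / 2) x *
          cosPlus n (fun i => (k' i : ℝ) + 1 / 2) x) = ∫ x in Fdom n, g x from rfl, hfinal]
  rcases eq_or_ne k k' with h | h
  · rw [if_pos h, if_pos h, ← inv_pow]
    ring
  · rw [if_neg h, if_neg h]
    ring
end

section
/- (AMDCT VI discrete orthogonality) Let N, n ≥ 1 and let k, k' ∈ D_N^−, i.e., integer vectors with N−1 ≥ k_1 > … > k_n ≥ 0 and N−1 ≥ k'_1 > … > k'_n ≥ 0. Then Σ_{r ∈ D_N^−} (∏_{i=1}^n c_{r_i+1}) · cos⁻_k(2(r_1+1/2)/(2N−1), …, 2(r_n+1/2)/(2N−1)) · cos⁻_{k'}(2(r_1+1/2)/(2N−1), …, 2(r_n+1/2)/(2N−1)) = d_k^{−1} · ((2N−1)/4)^n · δ_{k,k'}. -/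
open Real Finset

/-- The antisymmetric multivariate cosine function
`cos⁻_λ(x) = Σ_{σ ∈ S_n} sgn(σ) ∏_{i=1}^n cos(π λ_{σ(i)} x_i)`. -/
noncomputable def cosMinus (n : ℕ) (lam x : Fin n → ℝ) : ℝ :=
  ∑ σ : Equiv.Perm (Fin n),
    ((Equiv.Perm.sign σ : ℤ) : ℝ) * ∏ i : Fin n, Real.cos (Real.pi * lam (σ i) * x i)

/-- The coefficient `c_r`: `1/2` if `r = 0` or `r = N`, and `1` otherwise. -/
noncomputable def cc (N r : ℕ) : ℝ := if r = 0 ∨ r = N then 1 / 2 else 1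

lemma key_sum (N : ℕ) (hN : 1 ≤ N) (m : ℤ) (hm : m.natAbs ≤ 2 * N - 2) :
    ∑ r ∈ Finset.range N, cc N (r + 1) * Real.cos (π * m * (2 * r + 1) / (2 * (N : ℝ) - 1))
      = if m = 0 then (2 * (N : ℝ) - 1) / 2 else 0 := by
  obtain ⟨N', rfl⟩ : ∃ N', N = N' + 1 := ⟨N - 1, by omega⟩
  have hM : (0 : ℝ) < 2 * ((N' + 1 : ℕ) : ℝ) - 1 := by push_cast; linarith
  have hMne : (2 * ((N' + 1 : ℕ) : ℝ) - 1) ≠ 0 := ne_of_gt hM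
  have hcc1 : ∀ r : ℕ, r < N' → cc (N' + 1) (r + 1) = 1 := by
    intro r hr; unfold cc; rw [if_neg]; omega
  have hccN : cc (N' + 1) (N' + 1) = 1 / 2 := by unfold cc; rw [if_pos]; omega
  rcases eq_or_ne m 0 with rfl | hm0
  · rw [if_pos rfl]
    have : ∀ r ∈ Finset.range (N' + 1),
        cc (N' + 1) (r + 1) * Real.cos (π * ((0:ℤ):ℝ) * (2 * r + 1) / (2 * ((N' + 1 : ℕ) : ℝ) - 1))
          = cc (N' + 1) (r + 1) := by
      intro r _
      norm_num
    rw [Finset.sum_congr rfl this, Finset.sum_range_succ, hccN,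
      Finset.sum_congr rfl (fun r hr => hcc1 r (Finset.mem_range.1 hr)), Finset.sum_const,
      Finset.card_range, nsmul_eq_mul, mul_one]
    push_cast
    ring
  · rw [if_neg hm0]
    set α : ℝ := π * m / (2 * ((N' + 1 : ℕ) : ℝ) - 1) with hα
    have harg : ∀ r : ℕ, π * (m:ℝ) * (2 * (r : ℝ) + 1) / (2 * ((N' + 1 : ℕ) : ℝ) - 1)
        = (2 * (r : ℝ) + 1) * α := by
      intro r; rw [hα]; ring
    have hsin : Real.sin α ≠ 0 := by
      intro h
      rw [Real.sin_eq_zero_iff] at h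
      obtain ⟨j, hj⟩ := h
      have hq : (j:ℝ) * π * (2 * ((N' + 1 : ℕ) : ℝ) - 1) = π * (m:ℝ) := by
        rw [hj, hα, div_mul_cancel₀ _ hMne]
      have h3 : (j:ℝ) * (2 * ((N' + 1 : ℕ) : ℝ) - 1) = (m:ℝ) :=
        mul_left_cancel₀ Real.pi_ne_zero (by linear_combination hq)
      have hZ : j * (2 * ((N' : ℤ) + 1) - 1) = m := by
        exact_mod_cast (by push_cast at h3 ⊢; linear_combination h3 :
          (j:ℝ) * (2 * ((N' : ℝ) + 1) - 1) = (m:ℝ))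
      rcases eq_or_ne j 0 with rfl | hj0
      · simp at hZ; omega
      · have h1 : 1 ≤ j.natAbs := by omega
        have : (2 * (N' + 1) - 1 : ℕ) ≤ m.natAbs := by
          rw [← hZ, Int.natAbs_mul]
          have h2 : (2 * ((N' : ℤ) + 1) - 1).natAbs = 2 * (N' + 1) - 1 := by omega
          rw [h2]
          calc 2 * (N' + 1) - 1 = 1 * (2 * (N' + 1) - 1) := (one_mul _).symm
          _ ≤ j.natAbs * (2 * (N' + 1) - 1) := Nat.mul_le_mul_right _ h1
        omega
    have tele : ∀ r : ℕ, 2 * Real.sin α * Real.cos ((2 * (r : ℝ) + 1) * α)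
        = Real.sin (2 * ((r : ℝ) + 1) * α) - Real.sin (2 * (r : ℝ) * α) := by
      intro r
      rw [Real.sin_sub_sin]
      have h1 : (2 * ((r : ℝ) + 1) * α - 2 * (r : ℝ) * α) / 2 = α := by ring
      have h2 : (2 * ((r : ℝ) + 1) * α + 2 * (r : ℝ) * α) / 2 = (2 * (r : ℝ) + 1) * α := by ring
      rw [h1, h2]
    have hsum : ∑ r ∈ Finset.range (N' + 1), 2 * Real.sin α * Real.cos ((2 * (r : ℝ) + 1) * α)
        = Real.sin (2 * ((N' : ℝ) + 1) * α) := by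
      have h0 := Finset.sum_range_sub (fun r : ℕ => Real.sin (2 * (r : ℝ) * α)) (N' + 1)
      calc ∑ r ∈ Finset.range (N' + 1), 2 * Real.sin α * Real.cos ((2 * (r : ℝ) + 1) * α)
          = ∑ r ∈ Finset.range (N' + 1),
            (Real.sin (2 * (((r+1) : ℕ) : ℝ) * α) - Real.sin (2 * (r : ℝ) * α)) := by
            apply Finset.sum_congr rfl; intro r _; rw [tele r]; push_cast; ring_nf
        _ = Real.sin (2 * (((N' + 1 : ℕ)) : ℝ) * α) - Real.sin (2 * ((0 : ℕ) : ℝ) * α) := h0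
        _ = Real.sin (2 * ((N' : ℝ) + 1) * α) := by push_cast; simp
    have hMdiv : ∀ x : ℝ, (2 * ((N' + 1 : ℕ) : ℝ) - 1) * (x / (2 * ((N' + 1 : ℕ) : ℝ) - 1)) = x := by
      intro x; rw [mul_comm, div_mul_cancel₀ _ hMne]
    have hend : Real.sin (2 * ((N' : ℝ) + 1) * α) = (-1) ^ m * Real.sin α := by
      have h2N : 2 * ((N' : ℝ) + 1) * α = m * π + α := by
        calc 2 * ((N' : ℝ) + 1) * α
            = (2 * ((N' + 1 : ℕ) : ℝ) - 1) * α + α := by push_cast; ring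
          _ = π * m + α := by rw [hα, hMdiv]
          _ = m * π + α := by ring
      rw [h2N, Real.sin_add, Real.sin_int_mul_pi, zero_mul, zero_add]
      have hc : Real.cos ((m : ℝ) * π) = (-1) ^ m * 1 := by
        have := Real.cos_int_mul_pi_sub 0 m
        simpa using this
      rw [hc]; ring
    have hcosend : Real.cos ((2 * (N' : ℝ) + 1) * α) = (-1) ^ m := by
      have h1 : (2 * (N' : ℝ) + 1) * α = m * π := by
        calc (2 * (N' : ℝ) + 1) * α = (2 * ((N' + 1 : ℕ) : ℝ) - 1) * α := by push_cast; ring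
          _ = π * m := by rw [hα, hMdiv]
          _ = m * π := by ring
      rw [h1]
      have := Real.cos_int_mul_pi_sub 0 m
      simpa using this
    have hT : ∑ r ∈ Finset.range (N' + 1), Real.cos ((2 * (r : ℝ) + 1) * α)
        = (-1) ^ m / 2 := by
      have h2 : 2 * Real.sin α *
          ∑ r ∈ Finset.range (N' + 1), Real.cos ((2 * (r : ℝ) + 1) * α)
          = (-1) ^ m * Real.sin α := by
        rw [Finset.mul_sum, hsum, hend]
      have h3 : Real.sin α * (2 * ∑ r ∈ Finset.range (N' + 1), Real.cos ((2 * (r : ℝ) + 1) * α))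
          = Real.sin α * ((-1) ^ m) := by linear_combination h2
      have h4 := mul_left_cancel₀ hsin h3
      linarith
    rw [Finset.sum_congr rfl (fun r _ => by rw [harg r])]
    rw [Finset.sum_range_succ, hccN, Finset.sum_congr rfl
      (fun r hr => by rw [hcc1 r (Finset.mem_range.1 hr), one_mul])]
    have hT' : ∑ r ∈ Finset.range N', Real.cos ((2 * (r : ℝ) + 1) * α)
        = (-1) ^ m / 2 - (-1) ^ m := by
      have h5 := hT
      rw [Finset.sum_range_succ, hcosend] at h5
      linarith
    rw [hT', hcosend]
    ring

lemma oneD_aux (N : ℕ) (hN : 1 ≤ N) (a b : ℕ) (ha : a < N) (hb : b < N) :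
    ∑ j : Fin N, cc N ((j : ℕ) + 1) *
      (Real.cos (π * a * (2 * (((j : ℕ) : ℝ) + 1 / 2) / (2 * (N : ℝ) - 1))) *
       Real.cos (π * b * (2 * (((j : ℕ) : ℝ) + 1 / 2) / (2 * (N : ℝ) - 1))))
    = (2 * (N : ℝ) - 1) / 4 * (cc N a)⁻¹ * (if a = b then 1 else 0) := by
  have hprod : ∀ j : ℕ,
      Real.cos (π * a * (2 * ((j : ℝ) + 1 / 2) / (2 * (N : ℝ) - 1))) *
        Real.cos (π * b * (2 * ((j : ℝ) + 1 / 2) / (2 * (N : ℝ) - 1)))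
      = 1 / 2 * (Real.cos (π * (((a : ℤ) - b : ℤ) : ℝ) * (2 * (j : ℝ) + 1) / (2 * (N : ℝ) - 1))
          + Real.cos (π * (((a : ℤ) + b : ℤ) : ℝ) * (2 * (j : ℝ) + 1) / (2 * (N : ℝ) - 1))) := by
    intro j
    set x := π * (a:ℝ) * (2 * ((j : ℝ) + 1 / 2) / (2 * (N : ℝ) - 1)) with hx
    set y := π * (b:ℝ) * (2 * ((j : ℝ) + 1 / 2) / (2 * (N : ℝ) - 1)) with hy
    have e1 : π * (((a : ℤ) - b : ℤ) : ℝ) * (2 * (j : ℝ) + 1) / (2 * (N : ℝ) - 1) = x - y := by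
      rw [hx, hy]; push_cast; ring
    have e2 : π * (((a : ℤ) + b : ℤ) : ℝ) * (2 * (j : ℝ) + 1) / (2 * (N : ℝ) - 1) = x + y := by
      rw [hx, hy]; push_cast; ring
    rw [e1, e2]
    have hadd := Real.cos_add x y
    have hsub := Real.cos_sub x y
    linarith
  rw [Fin.sum_univ_eq_sum_range (fun j => cc N (j + 1) *
      (Real.cos (π * a * (2 * ((j : ℝ) + 1 / 2) / (2 * (N : ℝ) - 1))) *
       Real.cos (π * b * (2 * ((j : ℝ) + 1 / 2) / (2 * (N : ℝ) - 1)))))]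
  have step : ∑ j ∈ Finset.range N, cc N (j + 1) *
      (Real.cos (π * a * (2 * ((j : ℝ) + 1 / 2) / (2 * (N : ℝ) - 1))) *
       Real.cos (π * b * (2 * ((j : ℝ) + 1 / 2) / (2 * (N : ℝ) - 1))))
      = 1 / 2 * ((∑ j ∈ Finset.range N, cc N (j + 1) *
          Real.cos (π * (((a : ℤ) - b : ℤ) : ℝ) * (2 * (j : ℝ) + 1) / (2 * (N : ℝ) - 1)))
        + ∑ j ∈ Finset.range N, cc N (j + 1) *
          Real.cos (π * (((a : ℤ) + b : ℤ) : ℝ) * (2 * (j : ℝ) + 1) / (2 * (N : ℝ) - 1))) := by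
    rw [← Finset.sum_add_distrib, Finset.mul_sum]
    apply Finset.sum_congr rfl
    intro j _
    rw [hprod j]
    ring
  rw [step, key_sum N hN ((a : ℤ) - b) (by omega), key_sum N hN ((a : ℤ) + b) (by omega)]
  have hab1 : ((a : ℤ) - b = 0) ↔ (a = b) := by omega
  rcases eq_or_ne a b with rfl | hne
  · rw [if_pos rfl, if_pos (by omega : (a:ℤ) - a = 0)]
    rcases eq_or_ne a 0 with rfl | ha0
    · have h0 : ((0:ℕ):ℤ) + ((0:ℕ):ℤ) = 0 := by norm_num
      have hc : cc N 0 = 1/2 := by unfold cc; rw [if_pos (Or.inl rfl)]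
      rw [if_pos h0, hc]
      norm_num
      ring
    · have h0 : ¬(((a:ℕ):ℤ) + ((a:ℕ):ℤ) = 0) := by omega
      have hc : cc N a = 1 := by unfold cc; rw [if_neg (by omega)]
      rw [if_neg h0, hc]
      ring
  · rw [if_neg hne, if_neg (by omega : ¬((a:ℤ) - b = 0)),
      if_neg (show ¬(((a:ℕ):ℤ) + ((b:ℕ):ℤ) = 0) by omega)]
    ring

lemma cosMinus_eq_det (n : ℕ) (lam x : Fin n → ℝ) :
    cosMinus n lam x
      = Matrix.det (Matrix.of fun i j : Fin n => Real.cos (π * lam i * x j)) := by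
  rw [Matrix.det_apply]
  unfold cosMinus
  apply Finset.sum_congr rfl
  intro σ _
  rw [Units.smul_def, zsmul_eq_mul]
  rfl

lemma cosMinus_eq_zero (n : ℕ) (lam x : Fin n → ℝ) (i j : Fin n) (hij : i ≠ j)
    (h : x i = x j) : cosMinus n lam x = 0 := by
  rw [cosMinus_eq_det]
  exact Matrix.det_zero_of_column_eq hij (fun a => by simp [h])

lemma cosMinus_comp (n : ℕ) (lam x : Fin n → ℝ) (σ : Equiv.Perm (Fin n)) :
    cosMinus n lam (x ∘ σ) = ((Equiv.Perm.sign σ : ℤ) : ℝ) * cosMinus n lam x := by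
  rw [cosMinus_eq_det, cosMinus_eq_det]
  have h : (Matrix.of fun i j : Fin n => Real.cos (π * lam i * (x ∘ σ) j))
      = (Matrix.of fun i j : Fin n => Real.cos (π * lam i * x j)).submatrix id σ := rfl
  rw [h, Matrix.det_permute']

lemma sum_fun_prod {n N : ℕ} (g : Fin n → Fin N → ℝ) :
    ∑ r : Fin n → Fin N, ∏ i, g i (r i) = ∏ i, ∑ j, g i j := by
  rw [Finset.prod_univ_sum]
  rw [Fintype.piFinset_univ]

lemma perm_double_sum {n : ℕ} (h : Fin n → Fin n → ℝ) :
    ∑ σ : Equiv.Perm (Fin n), ∑ τ : Equiv.Perm (Fin n),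
      ((Equiv.Perm.sign σ : ℤ) : ℝ) * ((Equiv.Perm.sign τ : ℤ) : ℝ) * ∏ i, h (σ i) (τ i)
    = (Nat.factorial n : ℝ) * ∑ ρ : Equiv.Perm (Fin n),
        ((Equiv.Perm.sign ρ : ℤ) : ℝ) * ∏ i, h i (ρ i) := by
  have hss : ∀ u v : ℤˣ, ((u : ℤ) : ℝ) * (((v * u : ℤˣ) : ℤ) : ℝ) = ((v : ℤ) : ℝ) := by
    intro u v
    rcases Int.units_eq_one_or u with h1 | h1 <;> rcases Int.units_eq_one_or v with h2 | h2 <;>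
      rw [h1, h2] <;> norm_num
  have key : ∀ σ : Equiv.Perm (Fin n),
      ∑ τ : Equiv.Perm (Fin n),
        ((Equiv.Perm.sign σ : ℤ) : ℝ) * ((Equiv.Perm.sign τ : ℤ) : ℝ) * ∏ i, h (σ i) (τ i)
      = ∑ ρ : Equiv.Perm (Fin n), ((Equiv.Perm.sign ρ : ℤ) : ℝ) * ∏ i, h i (ρ i) := by
    intro σ
    rw [← Equiv.sum_comp (Equiv.mulRight σ)
      (fun τ => ((Equiv.Perm.sign σ : ℤ) : ℝ) * ((Equiv.Perm.sign τ : ℤ) : ℝ)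
        * ∏ i, h (σ i) (τ i))]
    apply Finset.sum_congr rfl
    intro ρ _
    have he : Equiv.mulRight σ ρ = ρ * σ := rfl
    rw [he]
    have hp : ∏ i, h (σ i) ((ρ * σ) i) = ∏ i, h i (ρ i) := by
      have h0 := Equiv.prod_comp σ (fun i => h i (ρ i))
      calc ∏ i, h (σ i) ((ρ * σ) i) = ∏ i, h (σ i) (ρ (σ i)) := by rfl
        _ = ∏ i, h i (ρ i) := h0
    rw [hp]
    have hsgn : ((Equiv.Perm.sign σ : ℤ) : ℝ) * ((Equiv.Perm.sign (ρ * σ) : ℤ) : ℝ)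
        = ((Equiv.Perm.sign ρ : ℤ) : ℝ) := by
      rw [Equiv.Perm.sign_mul]
      exact hss _ _
    rw [hsgn]
  rw [Finset.sum_congr rfl (fun σ _ => key σ), Finset.sum_const, Finset.card_univ,
    Fintype.card_perm, Fintype.card_fin, nsmul_eq_mul]

lemma det_delta {n N : ℕ} (k k' : Fin n → ℕ)
    (hk : StrictAnti k) (hk' : StrictAnti k') :
    ∑ ρ : Equiv.Perm (Fin n), ((Equiv.Perm.sign ρ : ℤ) : ℝ) *
      ∏ i, ((2 * (N : ℝ) - 1) / 4 * (cc N (k i))⁻¹ * (if k i = k' (ρ i) then 1 else 0))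
    = if k = k' then ∏ i, ((2 * (N : ℝ) - 1) / 4 * (cc N (k i))⁻¹) else 0 := by
  by_cases hkk : k = k'
  · subst hkk
    rw [if_pos rfl]
    rw [Finset.sum_eq_single (1 : Equiv.Perm (Fin n))]
    · simp only [Equiv.Perm.sign_one]
      rw [Finset.prod_congr rfl (fun i _ => by
        rw [if_pos (by rfl : k i = k ((1 : Equiv.Perm (Fin n)) i)), mul_one])]
      norm_num
    · intro ρ _ hρ
      obtain ⟨i, hi⟩ : ∃ i, ρ i ≠ i := by
        by_contra hc
        push_neg at hc
        exact hρ (Equiv.ext hc)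
      have : k i ≠ k (ρ i) := fun hc => hi (hk.injective hc.symm)
      rw [Finset.prod_eq_zero (Finset.mem_univ i) (by rw [if_neg this, mul_zero]), mul_zero]
    · intro hc
      exact absurd (Finset.mem_univ _) hc
  · rw [if_neg hkk]
    apply Finset.sum_eq_zero
    intro ρ _
    have hex : ∃ i, k i ≠ k' (ρ i) := by
      by_contra hc
      push_neg at hc
      apply hkk
      have hr : Set.range k = Set.range k' := by
        have h1 : k = k' ∘ ρ := funext hc
        rw [h1]
        exact ρ.surjective.range_comp k'
      have hanti' : StrictAnti (k' : Fin n → ℕ) := hk'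
      exact (hk.range_inj hanti').1 hr
    obtain ⟨i, hi⟩ := hex
    rw [Finset.prod_eq_zero (Finset.mem_univ i) (by rw [if_neg hi, mul_zero]), mul_zero]

noncomputable def xv (N : ℕ) (j : Fin N) : ℝ := 2 * (((j : ℕ) : ℝ) + 1 / 2) / (2 * (N : ℝ) - 1)

noncomputable def Fsum (n N : ℕ) (k k' : Fin n → ℕ) (r : Fin n → Fin N) : ℝ :=
  (∏ i, cc N ((r i : ℕ) + 1)) * cosMinus n (fun i => (k i : ℝ)) (fun i => xv N (r i)) *
    cosMinus n (fun i => (k' i : ℝ)) (fun i => xv N (r i))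

lemma oneD (N : ℕ) (hN : 1 ≤ N) (a b : ℕ) (ha : a < N) (hb : b < N) :
    ∑ j : Fin N, cc N ((j : ℕ) + 1) *
      (Real.cos (π * a * xv N j) * Real.cos (π * b * xv N j))
    = (2 * (N : ℝ) - 1) / 4 * (cc N a)⁻¹ * (if a = b then 1 else 0) :=
  oneD_aux N hN a b ha hb

lemma Fsum_comp {n N : ℕ} (k k' : Fin n → ℕ) (σ : Equiv.Perm (Fin n)) (r : Fin n → Fin N) :
    Fsum n N k k' (r ∘ σ) = Fsum n N k k' r := by
  unfold Fsum
  simp only [Function.comp_apply]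
  have h1 : ∏ i, cc N ((r (σ i) : ℕ) + 1) = ∏ i, cc N ((r i : ℕ) + 1) :=
    Equiv.prod_comp σ (fun i => cc N ((r i : ℕ) + 1))
  have h2 : cosMinus n (fun i => (k i : ℝ)) (fun i => xv N (r (σ i)))
      = ((Equiv.Perm.sign σ : ℤ) : ℝ) * cosMinus n (fun i => (k i : ℝ)) (fun i => xv N (r i)) :=
    cosMinus_comp n (fun i => (k i : ℝ)) (fun i => xv N (r i)) σ
  have h3 : cosMinus n (fun i => (k' i : ℝ)) (fun i => xv N (r (σ i)))
      = ((Equiv.Perm.sign σ : ℤ) : ℝ) * cosMinus n (fun i => (k' i : ℝ)) (fun i => xv N (r i)) :=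
    cosMinus_comp n (fun i => (k' i : ℝ)) (fun i => xv N (r i)) σ
  rw [h1, h2, h3]
  have hs : ((Equiv.Perm.sign σ : ℤ) : ℝ) * ((Equiv.Perm.sign σ : ℤ) : ℝ) = 1 := by
    rcases Int.units_eq_one_or (Equiv.Perm.sign σ) with h | h <;> rw [h] <;> norm_num
  calc (∏ i, cc N ((r i : ℕ) + 1)) *
        (((Equiv.Perm.sign σ : ℤ) : ℝ) * cosMinus n (fun i => (k i : ℝ)) (fun i => xv N (r i))) *
        (((Equiv.Perm.sign σ : ℤ) : ℝ) * cosMinus n (fun i => (k' i : ℝ)) (fun i => xv N (r i)))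
      = (((Equiv.Perm.sign σ : ℤ) : ℝ) * ((Equiv.Perm.sign σ : ℤ) : ℝ)) *
        ((∏ i, cc N ((r i : ℕ) + 1)) * cosMinus n (fun i => (k i : ℝ)) (fun i => xv N (r i)) *
          cosMinus n (fun i => (k' i : ℝ)) (fun i => xv N (r i))) := by ring
    _ = _ := by rw [hs, one_mul]

lemma Fsum_zero {n N : ℕ} (k k' : Fin n → ℕ) (r : Fin n → Fin N)
    (h : ¬ Function.Injective r) : Fsum n N k k' r = 0 := by
  rw [Function.not_injective_iff] at h
  obtain ⟨a, b, hab, hne⟩ := h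
  unfold Fsum
  rw [cosMinus_eq_zero n (fun i => (k i : ℝ)) (fun i => xv N (r i)) a b hne (by show xv N (r a) = xv N (r b); rw [hab])]
  ring

lemma sum_univ_eval {n N : ℕ} (hN : 1 ≤ N) (k k' : Fin n → ℕ)
    (hkb : ∀ i, k i < N) (hk'b : ∀ i, k' i < N) :
    ∑ r : Fin n → Fin N, Fsum n N k k' r
    = (Nat.factorial n : ℝ) * ∑ ρ : Equiv.Perm (Fin n), ((Equiv.Perm.sign ρ : ℤ) : ℝ) *
        ∏ i, ((2 * (N : ℝ) - 1) / 4 * (cc N (k i))⁻¹ * (if k i = k' (ρ i) then 1 else 0)) := by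
  have expand : ∀ r : Fin n → Fin N, Fsum n N k k' r =
      ∑ σ : Equiv.Perm (Fin n), ∑ τ : Equiv.Perm (Fin n),
        ((Equiv.Perm.sign σ : ℤ) : ℝ) * ((Equiv.Perm.sign τ : ℤ) : ℝ) *
          ∏ i, (cc N ((r i : ℕ) + 1) * (Real.cos (π * (k (σ i) : ℝ) * xv N (r i)) *
            Real.cos (π * (k' (τ i) : ℝ) * xv N (r i)))) := by
    intro r
    unfold Fsum cosMinus
    rw [mul_assoc, Finset.sum_mul_sum, Finset.mul_sum]
    refine Finset.sum_congr rfl (fun σ _ => ?_)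
    rw [Finset.mul_sum]
    refine Finset.sum_congr rfl (fun τ _ => ?_)
    have hp : ∏ i, (cc N ((r i : ℕ) + 1) * (Real.cos (π * (k (σ i) : ℝ) * xv N (r i)) *
          Real.cos (π * (k' (τ i) : ℝ) * xv N (r i))))
        = (∏ i, cc N ((r i : ℕ) + 1)) *
          ((∏ i, Real.cos (π * (k (σ i) : ℝ) * xv N (r i))) *
            (∏ i, Real.cos (π * (k' (τ i) : ℝ) * xv N (r i)))) := by
      rw [Finset.prod_mul_distrib]
      congr 1
      rw [Finset.prod_mul_distrib]
    rw [hp]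
    ring
  rw [Finset.sum_congr rfl (fun r _ => expand r), Finset.sum_comm,
    Finset.sum_congr rfl (fun σ _ => Finset.sum_comm)]
  have inner : ∀ σ τ : Equiv.Perm (Fin n),
      ∑ r : Fin n → Fin N, ((Equiv.Perm.sign σ : ℤ) : ℝ) * ((Equiv.Perm.sign τ : ℤ) : ℝ) *
        ∏ i, (cc N ((r i : ℕ) + 1) * (Real.cos (π * (k (σ i) : ℝ) * xv N (r i)) *
          Real.cos (π * (k' (τ i) : ℝ) * xv N (r i))))
      = ((Equiv.Perm.sign σ : ℤ) : ℝ) * ((Equiv.Perm.sign τ : ℤ) : ℝ) *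
        ∏ i, ((2 * (N : ℝ) - 1) / 4 * (cc N (k (σ i)))⁻¹ *
          (if k (σ i) = k' (τ i) then 1 else 0)) := by
    intro σ τ
    rw [← Finset.mul_sum]
    congr 1
    rw [sum_fun_prod (g := fun i j => cc N ((j : ℕ) + 1) *
      (Real.cos (π * (k (σ i) : ℝ) * xv N j) * Real.cos (π * (k' (τ i) : ℝ) * xv N j)))]
    exact Finset.prod_congr rfl (fun i _ =>
      oneD N hN (k (σ i)) (k' (τ i)) (hkb _) (hk'b _))
  rw [Finset.sum_congr rfl (fun σ _ => Finset.sum_congr rfl (fun τ _ => inner σ τ))]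
  exact perm_double_sum (fun a b => (2 * (N : ℝ) - 1) / 4 * (cc N (k a))⁻¹ *
    (if k a = k' b then 1 else 0))

lemma sum_dec_eq {n N : ℕ} (k k' : Fin n → ℕ) :
    ∑ r ∈ Finset.univ.filter (fun r : Fin n → Fin N => Function.Injective r), Fsum n N k k' r
    = (Nat.factorial n : ℝ) * ∑ r ∈ Finset.univ.filter
        (fun r : Fin n → Fin N => ∀ i j : Fin n, i < j → (r j : ℕ) < (r i : ℕ)),
      Fsum n N k k' r := by
  classical
  have hbij : ∑ p ∈ (Finset.univ.filter
        (fun r : Fin n → Fin N => ∀ i j : Fin n, i < j → (r j : ℕ) < (r i : ℕ))) ×ˢ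
        (Finset.univ : Finset (Equiv.Perm (Fin n))), Fsum n N k k' p.1
      = ∑ r ∈ Finset.univ.filter (fun r : Fin n → Fin N => Function.Injective r),
        Fsum n N k k' r := by
    apply Finset.sum_nbij (i := fun p : (Fin n → Fin N) × Equiv.Perm (Fin n) => p.1 ∘ p.2)
    · intro p hp
      rw [Finset.mem_product, Finset.mem_filter] at hp
      have hanti : StrictAnti p.1 := fun a b hab => Fin.lt_def.2 (hp.1.2 a b hab)
      rw [Finset.mem_filter]
      exact ⟨Finset.mem_univ _, hanti.injective.comp p.2.injective⟩
    · intro p hp q hq heq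
      have heq' : p.1 ∘ ⇑p.2 = q.1 ∘ ⇑q.2 := heq
      simp only [Finset.coe_product, Set.mem_prod, Finset.mem_coe, Finset.mem_filter] at hp hq
      have hpa : StrictAnti p.1 := fun a b hab => Fin.lt_def.2 (hp.1.2 a b hab)
      have hqa : StrictAnti q.1 := fun a b hab => Fin.lt_def.2 (hq.1.2 a b hab)
      have hrange : Set.range p.1 = Set.range q.1 := by
        have h1 : Set.range (p.1 ∘ p.2) = Set.range p.1 := p.2.surjective.range_comp p.1
        have h2 : Set.range (q.1 ∘ q.2) = Set.range q.1 := q.2.surjective.range_comp q.1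
        rw [← h1, ← h2, heq']
      have h1 : p.1 = q.1 := (hpa.range_inj hqa).1 hrange
      have h2 : p.2 = q.2 := by
        apply Equiv.ext
        intro i
        apply hqa.injective
        have := congrFun heq' i
        simp only [Function.comp_apply] at this
        rw [← this, h1]
      exact Prod.ext h1 h2
    · intro r hr
      simp only [Finset.mem_coe, Finset.mem_filter] at hr
      have hrinj : Function.Injective r := hr.2
      have hcard : (Finset.univ.image r).card = n := by
        rw [Finset.card_image_of_injective _ hrinj, Finset.card_univ, Fintype.card_fin]
      have hmem : ∀ i, r i ∈ Finset.univ.image r :=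
        fun i => Finset.mem_image_of_mem r (Finset.mem_univ i)
      let d : Fin n → Fin N := fun i => (Finset.univ.image r).orderEmbOfFin hcard i.rev
      have hd : StrictAnti d := fun a b hab =>
        ((Finset.univ.image r).orderEmbOfFin hcard).strictMono (Fin.rev_lt_rev.2 hab)
      let σf : Fin n → Fin n :=
        fun i => (((Finset.univ.image r).orderIsoOfFin hcard).symm ⟨r i, hmem i⟩).rev
      have hcomp : ∀ i, d (σf i) = r i := by
        intro i
        show (Finset.univ.image r).orderEmbOfFin hcard
          ((((Finset.univ.image r).orderIsoOfFin hcard).symm ⟨r i, hmem i⟩).rev).rev = r i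
        rw [Fin.rev_rev]
        rw [← Finset.coe_orderIsoOfFin_apply]
        rw [OrderIso.apply_symm_apply]
      have hσinj : Function.Injective σf := by
        intro a b hab
        apply hrinj
        rw [← hcomp a, ← hcomp b, hab]
      refine ⟨(d, Equiv.ofBijective σf (Finite.injective_iff_bijective.1 hσinj)), ?_, ?_⟩
      · simp only [Finset.coe_product, Set.mem_prod, Finset.mem_coe, Finset.mem_filter]
        exact ⟨⟨Finset.mem_univ _, fun i j hij => Fin.lt_def.1 (hd hij)⟩, Finset.mem_univ _⟩
      · funext i
        exact hcomp i
    · intro p hp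
      rw [Finset.mem_product] at hp
      exact (Fsum_comp k k' p.2 p.1).symm
  rw [← hbij, Finset.sum_product]
  dsimp only
  rw [Finset.sum_congr rfl (fun e _ => by
    rw [Finset.sum_const, Finset.card_univ, Fintype.card_perm, Fintype.card_fin, nsmul_eq_mul])]
  rw [← Finset.mul_sum]

theorem AMDCT_VI_orthogonality (n N : ℕ) (hn : 1 ≤ n) (hN : 1 ≤ N)
    (k k' : Fin n → ℕ)
    (hk : ∀ i j : Fin n, i < j → k j < k i) (hkb : ∀ i, k i ≤ N - 1)
    (hk' : ∀ i j : Fin n, i < j → k' j < k' i) (hk'b : ∀ i, k' i ≤ N - 1) :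
    ∑ r ∈ Finset.univ.filter
        (fun r : Fin n → Fin N => ∀ i j : Fin n, i < j → (r j : ℕ) < (r i : ℕ)),
      (∏ i : Fin n, cc N ((r i : ℕ) + 1)) *
        cosMinus n (fun i => (k i : ℝ))
          (fun i => 2 * (((r i : ℕ) : ℝ) + 1 / 2) / (2 * N - 1)) *
        cosMinus n (fun i => (k' i : ℝ))
          (fun i => 2 * (((r i : ℕ) : ℝ) + 1 / 2) / (2 * N - 1))
      = (∏ i : Fin n, cc N (k i))⁻¹ * ((2 * (N : ℝ) - 1) / 4) ^ n *
          (if k = k' then (1 : ℝ) else 0) := by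
  have hkb2 : ∀ i, k i < N := fun i => by have := hkb i; omega
  have hk'b2 : ∀ i, k' i < N := fun i => by have := hk'b i; omega
  have hkanti : StrictAnti k := fun i j hij => hk i j hij
  have hk'anti : StrictAnti k' := fun i j hij => hk' i j hij
  have hstart : ∑ r ∈ Finset.univ.filter
        (fun r : Fin n → Fin N => ∀ i j : Fin n, i < j → (r j : ℕ) < (r i : ℕ)),
      (∏ i : Fin n, cc N ((r i : ℕ) + 1)) *
        cosMinus n (fun i => (k i : ℝ))
          (fun i => 2 * (((r i : ℕ) : ℝ) + 1 / 2) / (2 * N - 1)) *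
        cosMinus n (fun i => (k' i : ℝ))
          (fun i => 2 * (((r i : ℕ) : ℝ) + 1 / 2) / (2 * N - 1))
      = ∑ r ∈ Finset.univ.filter
        (fun r : Fin n → Fin N => ∀ i j : Fin n, i < j → (r j : ℕ) < (r i : ℕ)),
        Fsum n N k k' r := Finset.sum_congr rfl (fun r _ => rfl)
  rw [hstart]
  have hfac : ((Nat.factorial n : ℕ) : ℝ) ≠ 0 := Nat.cast_ne_zero.2 (Nat.factorial_ne_zero n)
  have h1 := sum_dec_eq (N := N) k k'
  have h2 : ∑ r : Fin n → Fin N, Fsum n N k k' r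
      = ∑ r ∈ Finset.univ.filter (fun r : Fin n → Fin N => Function.Injective r),
          Fsum n N k k' r := by
    rw [← Finset.sum_filter_add_sum_filter_not Finset.univ
      (fun r : Fin n → Fin N => Function.Injective r) (Fsum n N k k')]
    rw [Finset.sum_eq_zero (fun r hr => Fsum_zero k k' r (Finset.mem_filter.1 hr).2), add_zero]
  have h3 := sum_univ_eval hN k k' hkb2 hk'b2
  have h4 := det_delta (N := N) k k' hkanti hk'anti
  have h5 : (Nat.factorial n : ℝ) * ∑ r ∈ Finset.univ.filter
        (fun r : Fin n → Fin N => ∀ i j : Fin n, i < j → (r j : ℕ) < (r i : ℕ)),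
        Fsum n N k k' r
      = (Nat.factorial n : ℝ) *
        (if k = k' then ∏ i, ((2 * (N : ℝ) - 1) / 4 * (cc N (k i))⁻¹) else 0) := by
    rw [← h1, ← h2, h3, h4]
  have h6 := mul_left_cancel₀ hfac h5
  rw [h6]
  by_cases hkk : k = k'
  · rw [if_pos hkk, if_pos hkk, Finset.prod_mul_distrib, Finset.prod_const,
      Finset.card_univ, Fintype.card_fin, Finset.prod_inv_distrib, mul_one]
    ring
  · rw [if_neg hkk, if_neg hkk, mul_zero]
end
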